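/- A k-dimensional polynomial subspace U ⊆ P_n is spanned by monomials if and only if its 0-pivot sequence equals its ∞-pivot sequence, i.e., the set of orders at 0 of nonzero elements of U coincides with the set of degrees of nonzero elements of U. -/

import Mathlib

open Polynomial

namespace PivotAux

def ordSet (U : Submodule ℂ (Polynomial ℂ)) : Set ℕ :=
  {m | ∃ q ∈ U, q ≠ 0 ∧ q.natTrailingDegree = m}

def degSet (U : Submodule ℂ (Polynomial ℂ)) : Set ℕ :=
  {m | ∃ q ∈ U, q ≠ 0 ∧ q.natDegree = m}

noncomputable def suppIn (S : Set ℕ) : Submodule ℂ (Polynomial ℂ) where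
  carrier := {q | ∀ i, i ∉ S → q.coeff i = 0}
  zero_mem' := by intro i _; simp
  add_mem' := by intro p q hp hq i hi; simp [hp i hi, hq i hi]
  smul_mem' := by intro c p hp i hi; simp [hp i hi]

lemma forward {k : ℕ} (U : Submodule ℂ (Polynomial ℂ)) (μ : Fin k → ℕ)
    (hμ : U = Submodule.span ℂ (Set.range fun i : Fin k => (X : Polynomial ℂ) ^ μ i)) :
    ordSet U = degSet U := by
  have hle : U ≤ suppIn (Set.range μ) := by
    rw [hμ, Submodule.span_le]
    rintro _ ⟨j, rfl⟩ i hi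
    have : i ≠ μ j := fun h => hi ⟨j, h.symm⟩
    simp [coeff_X_pow, this]
  have hmem : ∀ m ∈ Set.range μ, (X : Polynomial ℂ) ^ m ∈ U := by
    rintro m ⟨j, rfl⟩
    rw [hμ]
    exact Submodule.subset_span ⟨j, rfl⟩
  have hXne : ∀ m : ℕ, (X : Polynomial ℂ) ^ m ≠ 0 := fun m => pow_ne_zero _ X_ne_zero
  have hord : ordSet U = Set.range μ := by
    ext m
    constructor
    · rintro ⟨q, hqU, hq0, rfl⟩
      by_contra h
      exact (trailingCoeff_nonzero_iff_nonzero.mpr hq0) (hle hqU _ h)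
    · intro hm
      exact ⟨X ^ m, hmem m hm, hXne m, natTrailingDegree_X_pow m⟩
  have hdeg : degSet U = Set.range μ := by
    ext m
    constructor
    · rintro ⟨q, hqU, hq0, rfl⟩
      by_contra h
      exact (leadingCoeff_ne_zero.mpr hq0) (hle hqU _ h)
    · intro hm
      exact ⟨X ^ m, hmem m hm, hXne m, natDegree_X_pow m⟩
  rw [hord, hdeg]

lemma backward : ∀ (k : ℕ) (N : ℕ) (U : Submodule ℂ (Polynomial ℂ)),
    FiniteDimensional ℂ U →
    (∀ q ∈ U, q.natDegree ≤ N) → Module.finrank ℂ U = k → ordSet U = degSet U →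
    ∃ μ : Fin k → ℕ,
      U = Submodule.span ℂ (Set.range fun i : Fin k => (X : Polynomial ℂ) ^ μ i) := by
  intro k
  induction k with
  | zero =>
    intro N U hfd _ hrank _
    haveI := hfd
    refine ⟨Fin.elim0, ?_⟩
    have : U = ⊥ := Submodule.finrank_eq_zero.mp hrank
    rw [this]
    have : (Set.range fun i : Fin 0 => (X : Polynomial ℂ) ^ Fin.elim0 i) = ∅ := by
      simp [Set.range_eq_empty]
    rw [this, Submodule.span_empty]
  | succ k ih =>
    intro N U hfd hbound hrank hS
    haveI := hfd
    -- U nonzero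
    have hUne : U ≠ ⊥ := fun h => by rw [h, finrank_bot] at hrank; exact Nat.succ_ne_zero k hrank.symm
    obtain ⟨q₀, hq₀U, hq₀⟩ := (Submodule.ne_bot_iff U).mp hUne
    have hdne : (degSet U).Nonempty := ⟨q₀.natDegree, q₀, hq₀U, hq₀, rfl⟩
    have hbdd : BddAbove (degSet U) := by
      refine ⟨N, ?_⟩
      rintro m ⟨q, hqU, _, rfl⟩
      exact hbound q hqU
    set a := sSup (degSet U) with ha_def
    have ha_mem : a ∈ degSet U := Nat.sSup_mem hdne hbdd
    have ha_max : ∀ m ∈ degSet U, m ≤ a := fun m hm => le_csSup hbdd hm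
    -- degree bound for elements of U
    have hdegle : ∀ q ∈ U, q ≠ 0 → q.natDegree ≤ a := fun q hqU hq0 =>
      ha_max _ ⟨q, hqU, hq0, rfl⟩
    -- take p with trailing degree a
    have ha_ord : a ∈ ordSet U := hS ▸ ha_mem
    obtain ⟨p, hpU, hp0, hptr⟩ := ha_ord
    have hpdeg : p.natDegree = a := le_antisymm (hdegle p hpU hp0)
      (hptr ▸ p.natTrailingDegree_le_natDegree)
    set c := p.coeff a with hc_def
    have hc : c ≠ 0 := by
      rw [hc_def, ← hpdeg]
      exact leadingCoeff_ne_zero.mpr hp0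
    have hsupp : ∀ i, i ≠ a → p.coeff i = 0 := by
      intro i hi
      by_contra h
      have h1 := p.natTrailingDegree_le_of_ne_zero h
      have h2 := p.le_natDegree_of_ne_zero h
      omega
    have hp_eq : p = c • (X : Polynomial ℂ) ^ a := by
      ext i
      rcases eq_or_ne i a with rfl | hi
      · simp [coeff_X_pow, hc_def]
      · simp [coeff_X_pow, hi, hsupp i hi]
    have hXa : (X : Polynomial ℂ) ^ a ∈ U := by
      have := U.smul_mem c⁻¹ hpU
      rwa [hp_eq, smul_smul, inv_mul_cancel₀ hc, one_smul] at this
    -- the coefficient functional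
    set φ : U →ₗ[ℂ] ℂ := (Polynomial.lcoeff ℂ a).comp U.subtype with hφ_def
    have hφp : φ ⟨p, hpU⟩ = c := rfl
    have hrange : LinearMap.range φ = ⊤ := by
      rw [eq_top_iff]
      intro y _
      have hx : c ∈ LinearMap.range φ := ⟨⟨p, hpU⟩, hφp⟩
      have : y = (y / c) • c := by rw [smul_eq_mul, div_mul_cancel₀ _ hc]
      rw [this]
      exact Submodule.smul_mem _ _ hx
    have hkerrank : Module.finrank ℂ (LinearMap.ker φ) = k := by
      have h1 := LinearMap.finrank_range_add_finrank_ker φ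
      rw [hrange, finrank_top, Module.finrank_self, hrank] at h1
      omega
    set U' : Submodule ℂ (Polynomial ℂ) := (LinearMap.ker φ).map U.subtype with hU'_def
    have hU'mem : ∀ q : Polynomial ℂ, q ∈ U' ↔ q ∈ U ∧ q.coeff a = 0 := by
      intro q
      constructor
      · rintro ⟨⟨r, hr⟩, hker, rfl⟩
        exact ⟨hr, hker⟩
      · rintro ⟨hq, hcoeff⟩
        exact ⟨⟨q, hq⟩, hcoeff, rfl⟩
    have hU'le : U' ≤ U := by
      intro q hq; exact ((hU'mem q).mp hq).1
    haveI : FiniteDimensional ℂ U' := Module.Finite.map _ _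
    have hU'rank : Module.finrank ℂ U' = k := by
      rw [hU'_def, Submodule.finrank_map_subtype_eq]
      exact hkerrank
    -- order and degree sets of U'
    have hOrdSub : ∀ m ∈ ordSet U', m ∈ ordSet U ∧ m ≠ a := by
      rintro m ⟨q, hqU', hq0, rfl⟩
      obtain ⟨hqU, hqa⟩ := (hU'mem q).mp hqU'
      refine ⟨⟨q, hqU, hq0, rfl⟩, fun h => ?_⟩
      exact (trailingCoeff_nonzero_iff_nonzero.mpr hq0)
        (by rw [trailingCoeff, h]; exact hqa)
    have hDegSub : ∀ m ∈ degSet U', m ∈ degSet U ∧ m ≠ a := by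
      rintro m ⟨q, hqU', hq0, rfl⟩
      obtain ⟨hqU, hqa⟩ := (hU'mem q).mp hqU'
      refine ⟨⟨q, hqU, hq0, rfl⟩, fun h => ?_⟩
      exact (leadingCoeff_ne_zero.mpr hq0)
        (by rw [leadingCoeff, h]; exact hqa)
    have hDegSup : ∀ m, m ∈ degSet U → m ≠ a → m ∈ degSet U' := by
      rintro m ⟨q, hqU, hq0, rfl⟩ hma
      have hlt : q.natDegree < a := lt_of_le_of_ne (hdegle q hqU hq0) hma
      exact ⟨q, (hU'mem q).mpr ⟨hqU, coeff_eq_zero_of_natDegree_lt hlt⟩, hq0, rfl⟩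
    have hOrdSup : ∀ m, m ∈ ordSet U → m ≠ a → m ∈ ordSet U' := by
      rintro m ⟨q, hqU, hq0, rfl⟩ hma
      have hlt : q.natTrailingDegree < a :=
        lt_of_le_of_ne (le_trans q.natTrailingDegree_le_natDegree (hdegle q hqU hq0)) hma
      set q' := q - (q.coeff a) • (X : Polynomial ℂ) ^ a with hq'_def
      have hq'U : q' ∈ U := U.sub_mem hqU (U.smul_mem _ hXa)
      have hq'c : ∀ i, i ≠ a → q'.coeff i = q.coeff i := by
        intro i hi
        simp [hq'_def, coeff_X_pow, hi]
      have hq'a : q'.coeff a = 0 := by simp [hq'_def, coeff_X_pow]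
      have hq'm : q'.coeff q.natTrailingDegree ≠ 0 := by
        rw [hq'c _ (Nat.ne_of_lt hlt)]
        exact trailingCoeff_nonzero_iff_nonzero.mpr hq0
      have hq'0 : q' ≠ 0 := fun h => hq'm (by simp [h])
      refine ⟨q', (hU'mem q').mpr ⟨hq'U, hq'a⟩, hq'0, ?_⟩
      refine le_antisymm (natTrailingDegree_le_of_ne_zero hq'm) ?_
      refine le_natTrailingDegree hq'0 ?_
      intro i hi
      rw [hq'c i (Nat.ne_of_lt (lt_trans hi hlt))]
      exact coeff_eq_zero_of_lt_natTrailingDegree hi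
    have hS' : ordSet U' = degSet U' := by
      ext m
      constructor
      · intro hm
        obtain ⟨hmU, hma⟩ := hOrdSub m hm
        exact hDegSup m (hS ▸ hmU) hma
      · intro hm
        obtain ⟨hmU, hma⟩ := hDegSub m hm
        exact hOrdSup m (hS ▸ hmU) hma
    -- induction hypothesis
    obtain ⟨μ', hμ'⟩ := ih N U' inferInstance (fun q hq => hbound q (hU'le hq)) hU'rank hS'
    refine ⟨Fin.cons a μ', ?_⟩
    have hrange_cons : (Set.range fun i : Fin (k + 1) => (X : Polynomial ℂ) ^ Fin.cons a μ' i)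
        = insert ((X : Polynomial ℂ) ^ a)
          (Set.range fun i : Fin k => (X : Polynomial ℂ) ^ μ' i) := by
      have : (fun i : Fin (k + 1) => (X : Polynomial ℂ) ^ Fin.cons a μ' i)
          = Fin.cons ((X : Polynomial ℂ) ^ a) (fun i : Fin k => (X : Polynomial ℂ) ^ μ' i) := by
        funext i
        refine Fin.cases ?_ ?_ i <;> simp
      rw [this, Fin.range_cons]
    rw [hrange_cons, Submodule.span_insert, ← hμ']
    apply le_antisymm
    · intro q hqU
      have : q = (q.coeff a / c) • p + (q - (q.coeff a) • (X : Polynomial ℂ) ^ a) := by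
        rw [hp_eq, smul_smul, div_mul_cancel₀ _ hc]
        ring
      rw [this]
      refine Submodule.add_mem _ (Submodule.mem_sup_left ?_) (Submodule.mem_sup_right ?_)
      · rw [hp_eq]
        exact Submodule.smul_mem _ _ (Submodule.smul_mem _ _ (Submodule.mem_span_singleton_self _))
      · refine (hU'mem _).mpr ⟨U.sub_mem hqU (U.smul_mem _ hXa), ?_⟩
        simp [coeff_X_pow]
    · refine sup_le ?_ hU'le
      rw [Submodule.span_singleton_le_iff_mem]
      exact hXa

end PivotAux

/-- a `k`-dimensional subspace `U ⊆ P_n` is spanned by monomials iff its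
`0`-pivot sequence equals its `∞`-pivot sequence, i.e. the set of orders at `0` of
nonzero elements of `U` coincides with the set of degrees of nonzero elements of `U`. -/
theorem monomial_subspace_iff_pivots_match (k n : ℕ) (U : Submodule ℂ (Polynomial ℂ))
    (hUn : U ≤ Polynomial.degreeLE ℂ (n : ℕ)) (hdim : Module.finrank ℂ U = k) :
    (∃ μ : Fin k → ℕ,
        U = Submodule.span ℂ (Set.range fun i : Fin k => (X : Polynomial ℂ) ^ μ i)) ↔
      {m : ℕ | ∃ q ∈ U, q ≠ 0 ∧ Polynomial.rootMultiplicity 0 q = m} =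
        {m : ℕ | ∃ q ∈ U, q ≠ 0 ∧ q.natDegree = m} := by
  have hsets : {m : ℕ | ∃ q ∈ U, q ≠ 0 ∧ Polynomial.rootMultiplicity 0 q = m}
      = PivotAux.ordSet U := by
    simp only [PivotAux.ordSet, rootMultiplicity_eq_natTrailingDegree']
  rw [hsets]
  show _ ↔ PivotAux.ordSet U = PivotAux.degSet U
  constructor
  · rintro ⟨μ, hμ⟩
    exact PivotAux.forward U μ hμ
  · intro hS
    classical
    haveI : FiniteDimensional ℂ (Polynomial.degreeLE ℂ (n : ℕ)) := by
      rw [Polynomial.degreeLE_eq_span_X_pow]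
      infer_instance
    haveI : FiniteDimensional ℂ U := Submodule.finiteDimensional_of_le hUn
    have hbound : ∀ q ∈ U, q.natDegree ≤ n := by
      intro q hq
      have := Polynomial.mem_degreeLE.mp (hUn hq)
      exact Polynomial.natDegree_le_iff_degree_le.mpr this
    exact PivotAux.backward k n U inferInstance hbound hdim hS
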